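/- The Fourier transform of the kernel K_{λ,t}(u) := (1/π)·(2αλ²/(u² + (2αλ²)²))·(2αλ²t·sin(tu)/(tu) − cos(tu) + e^{−2αλ²t}) is given by K̂_{λ,t}(q) = (2π)^{−1/2}·(1 − e^{−2αλ²(t−|q|)}) for |q| ≤ t, and K̂_{λ,t}(q) = 0 for |q| > t. -/

import Mathlib

open MeasureTheory Real

/-- The kernel `K_{λ,t}` from the relaxation formula. -/
noncomputable def Kkernel (α lam t u : ℝ) : ℝ :=
  (1 / Real.pi) * (2 * α * lam ^ 2 / (u ^ 2 + (2 * α * lam ^ 2) ^ 2)) *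
    (2 * α * lam ^ 2 * t * (if u = 0 then 1 else Real.sin (t * u) / (t * u)) -
      Real.cos (t * u) + Real.exp (-2 * α * lam ^ 2 * t))

/-- Fourier transform with the convention `f̂(q) = (2π)^{-1/2} ∫ f(u) e^{-iqu} du`. -/
noncomputable def fourierT (f : ℝ → ℝ) (q : ℝ) : ℂ :=
  ((Real.sqrt (2 * Real.pi))⁻¹ : ℝ) *
    ∫ u : ℝ, (f u : ℂ) * Complex.exp (-Complex.I * (q : ℂ) * (u : ℂ))

open FourierTransform intervalIntegral


/-- simplified kernel with `a = 2αλ²`. -/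
noncomputable def Kk (a t u : ℝ) : ℝ :=
  (1 / Real.pi) * (a / (u ^ 2 + a ^ 2)) *
    (a * t * (if u = 0 then 1 else Real.sin (t * u) / (t * u)) -
      Real.cos (t * u) + Real.exp (-(a * t)))

/-- the claimed Fourier transform, written in a manifestly continuous way. -/
noncomputable def gker (a t q : ℝ) : ℝ := 1 - Real.exp (-(a * (t - min |q| t)))

noncomputable def Gc (a t v : ℝ) : ℂ := ((gker a t (2 * Real.pi * v) : ℝ) : ℂ)

lemma Kk_even (a t u : ℝ) : Kk a t (-u) = Kk a t u := by
  by_cases hu : u = 0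
  · simp [hu]
  · unfold Kk
    rw [if_neg (neg_ne_zero.mpr hu), if_neg hu]
    have : t * -u = -(t * u) := by ring
    rw [this, Real.sin_neg, Real.cos_neg, neg_div_neg_eq]
    ring

lemma gker_even (a t q : ℝ) : gker a t (-q) = gker a t q := by simp [gker]

lemma Jval (a t u : ℝ) (ha : 0 < a) (ht : 0 < t) :
    ∫ q in (0:ℝ)..t, 2 * Real.cos (u * q) * (1 - Real.exp (-(a * (t - q))))
      = 2 * Real.pi * Kk a t u := by
  have hd : (0:ℝ) < a ^ 2 + u ^ 2 := by positivity
  by_cases hu : u = 0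
  · subst hu
    have key : ∀ q ∈ Set.uIcc (0:ℝ) t, HasDerivAt
        (fun q => 2 * q - (2 / a) * Real.exp (a * (q - t)))
        (2 * Real.cos (0 * q) * (1 - Real.exp (-(a * (t - q))))) q := by
      intro q _
      have h1 : HasDerivAt (fun q : ℝ => a * (q - t)) a q := by
        simpa using ((hasDerivAt_id q).sub_const t).const_mul a
      have h2 := h1.exp
      have h3 := ((hasDerivAt_id q).const_mul (2:ℝ)).sub (h2.const_mul (2 / a))
      convert h3 using 1
      case e'_4 => rfl
      case e'_5 => rfl
      case e'_8 => rfl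
      rw [show -(a * (t - q)) = a * (q - t) by ring]
      simp only [zero_mul, Real.cos_zero]
      field_simp
    rw [intervalIntegral.integral_eq_sub_of_hasDerivAt key (Continuous.intervalIntegrable (by fun_prop) _ _)]
    simp only [Kk, if_true, if_pos rfl, sub_self, mul_zero, Real.exp_zero, Real.cos_zero]
    rw [show a * (0 - t) = -(a * t) by ring]
    field_simp
    ring
  · have key : ∀ q ∈ Set.uIcc (0:ℝ) t, HasDerivAt
        (fun q => 2 * Real.sin (u * q) / u -
          (2 / (a ^ 2 + u ^ 2)) * (Real.exp (a * (q - t)) *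
            (a * Real.cos (u * q) + u * Real.sin (u * q))))
        (2 * Real.cos (u * q) * (1 - Real.exp (-(a * (t - q))))) q := by
      intro q _
      have hq : HasDerivAt (fun q : ℝ => u * q) u q := by
        simpa using (hasDerivAt_id q).const_mul u
      have hsin := hq.sin
      have hcos := hq.cos
      have h1 : HasDerivAt (fun q : ℝ => a * (q - t)) a q := by
        simpa using ((hasDerivAt_id q).sub_const t).const_mul a
      have hexp := h1.exp
      have hin := (hcos.const_mul a).add (hsin.const_mul u)
      have h2 := (hexp.mul hin).const_mul (2 / (a ^ 2 + u ^ 2))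
      have h3 := ((hsin.const_mul (2:ℝ)).div_const u).sub h2
      convert h3 using 1
      case e'_4 => rfl
      case e'_5 => rfl
      case e'_8 => rfl
      rw [show -(a * (t - q)) = a * (q - t) by ring]
      simp only [Pi.add_apply]
      field_simp
      ring
    rw [intervalIntegral.integral_eq_sub_of_hasDerivAt key (Continuous.intervalIntegrable (by fun_prop) _ _)]
    simp only [Kk, if_neg hu, sub_self, mul_zero, Real.exp_zero, Real.cos_zero,
      Real.sin_zero, mul_one]
    rw [show a * (0 - t) = -(a * t) by ring]
    have hπ := Real.pi_ne_zero
    field_simp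
    ring_nf

lemma gker_cont (a t : ℝ) : Continuous (gker a t) := by
  unfold gker; fun_prop

lemma gker_zero (a t q : ℝ) (h : t ≤ |q|) : gker a t q = 0 := by
  simp [gker, min_eq_right h]

lemma inv_eq (a t : ℝ) (ha : 0 < a) (ht : 0 < t) (u : ℝ) :
    𝓕⁻ (Gc a t) u = ((Kk a t u : ℝ) : ℂ) := by
  have h2π : (0:ℝ) < 2 * Real.pi := by positivity
  set b := t / (2 * Real.pi) with hb
  rw [Real.fourierInv_eq_fourier_neg,
    Real.fourier_real_eq_integral_exp_smul]
  set H : ℝ → ℂ := fun q => Complex.exp ((q * u : ℝ) * Complex.I) * ((gker a t q : ℝ) : ℂ)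
    with hH
  have hHcont : Continuous H := by
    apply Continuous.mul
    · fun_prop
    · exact Complex.continuous_ofReal.comp (gker_cont a t)
  have hHeq : ∀ v : ℝ,
      Complex.exp (↑(-2 * Real.pi * v * -u) * Complex.I) • Gc a t v
        = H (2 * Real.pi * v) := by
    intro v
    rw [smul_eq_mul]
    simp only [Gc, hH]
    congr 2
    push_cast
    ring
  have hsupp : Function.support
      (fun v => Complex.exp (↑(-2 * Real.pi * v * -u) * Complex.I) • Gc a t v)
        ⊆ Set.Ioc (-b) b := by
    intro v hv
    have hg : gker a t (2 * Real.pi * v) ≠ 0 := by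
      intro h0
      apply hv
      simp [Gc, h0]
    have habs : |2 * Real.pi * v| < t := by
      by_contra hle
      exact hg (gker_zero _ _ _ (le_of_not_gt hle))
    rw [abs_mul, abs_of_pos h2π] at habs
    have : |v| < b := by
      rw [hb, lt_div_iff₀ h2π]; linarith [habs]
    have h2 := abs_lt.mp this
    exact ⟨h2.1, h2.2.le⟩
  rw [← intervalIntegral.integral_eq_integral_of_support_subset hsupp]
  rw [intervalIntegral.integral_congr (fun v _ => hHeq v)]
  rw [intervalIntegral.integral_comp_mul_left H (ne_of_gt h2π)]
  rw [show 2 * Real.pi * -b = -t by rw [hb]; field_simp <;> ring,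
      show 2 * Real.pi * b = t by rw [hb]; field_simp <;> ring]
  have hHi : ∀ c d : ℝ, IntervalIntegrable H volume c d :=
    fun c d => hHcont.intervalIntegrable _ _
  rw [← intervalIntegral.integral_add_adjacent_intervals (hHi (-t) 0) (hHi 0 t)]
  have hneg : ∫ q in (-t)..(0:ℝ), H q = ∫ q in (0:ℝ)..t, H (-q) := by
    rw [intervalIntegral.integral_comp_neg]; simp
  have hInt1 : IntervalIntegrable (fun q => H (-q)) volume 0 t := by
    apply Continuous.intervalIntegrable; fun_prop
  rw [hneg, ← intervalIntegral.integral_add hInt1 (hHi 0 t)]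
  have hcongr : Set.EqOn (fun q => H (-q) + H q)
      (fun q => ((2 * Real.cos (u * q) * (1 - Real.exp (-(a * (t - q)))) : ℝ) : ℂ))
      (Set.uIcc 0 t) := by
    intro q hq
    rw [Set.uIcc_of_le ht.le] at hq
    have h1 : gker a t q = 1 - Real.exp (-(a * (t - q))) := by
      rw [gker, abs_of_nonneg hq.1, min_eq_left hq.2]
    simp only [hH, gker_even, h1]
    push_cast
    rw [mul_comm (u:ℂ) (q:ℂ), Complex.two_cos]
    ring
  rw [intervalIntegral.integral_congr hcongr, intervalIntegral.integral_ofReal,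
    Jval a t u ha ht]
  rw [Complex.real_smul]
  push_cast
  have hne : (2 * (Real.pi:ℂ)) ≠ 0 := by exact_mod_cast ne_of_gt h2π
  rw [show ((2:ℂ) * ↑Real.pi)⁻¹ * (2 * ↑Real.pi * ↑(Kk a t u))
      = (2 * ↑Real.pi)⁻¹ * (2 * ↑Real.pi) * ↑(Kk a t u) by ring,
    inv_mul_cancel₀ hne, one_mul]

lemma Kk_meas (a t : ℝ) : Measurable (Kk a t) := by
  unfold Kk
  apply Measurable.mul
  · fun_prop
  · apply Measurable.add
    apply Measurable.sub
    · apply Measurable.mul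
      · fun_prop
      · exact Measurable.ite (by simp) measurable_const (by fun_prop)
    all_goals fun_prop

lemma Kk_int (a t : ℝ) (ha : 0 < a) (ht : 0 < t) : Integrable (Kk a t) := by
  have h1 : Integrable (fun u : ℝ => (u ^ 2 + a ^ 2)⁻¹) := by
    have h2 := (integrable_inv_one_add_sq.comp_div ha.ne').const_mul ((a ^ 2)⁻¹)
    apply h2.congr (Filter.Eventually.of_forall fun x => ?_)
    field_simp
    ring
  apply Integrable.mono' ((h1.const_mul ((1 / Real.pi) * a * (a * t + 2))))
    (Kk_meas a t).aestronglyMeasurable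
  refine Filter.Eventually.of_forall fun u => ?_
  have hd : (0:ℝ) < u ^ 2 + a ^ 2 := by positivity
  have hs : |(if u = 0 then (1:ℝ) else Real.sin (t * u) / (t * u))| ≤ 1 := by
    split
    · norm_num
    · rw [abs_div]
      exact div_le_one_of_le₀ Real.abs_sin_le_abs (abs_nonneg _)
  have hB : ∀ s : ℝ, |s| ≤ 1 →
      |a * t * s - Real.cos (t * u) + Real.exp (-(a * t))| ≤ a * t + 2 := by
    intro s hs1
    have h3 : |a * t * s| ≤ a * t := by
      rw [abs_mul, abs_of_pos (by positivity : (0:ℝ) < a * t)]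
      exact mul_le_of_le_one_right (by positivity) hs1
    have h4 : |Real.exp (-(a * t))| ≤ 1 := by
      rw [abs_of_pos (Real.exp_pos _)]
      exact Real.exp_le_one_iff.mpr (by nlinarith)
    have h5 := Real.abs_cos_le_one (t * u)
    have h6 := abs_add_le (a * t * s - Real.cos (t * u)) (Real.exp (-(a * t)))
    have h7 := abs_sub (a * t * s) (Real.cos (t * u))
    linarith
  rw [Real.norm_eq_abs, Kk, abs_mul,
    abs_of_nonneg (by positivity : (0:ℝ) ≤ (1 / Real.pi) * (a / (u ^ 2 + a ^ 2)))]
  have hfinal := mul_le_mul_of_nonneg_left (hB _ hs)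
    (by positivity : (0:ℝ) ≤ (1 / Real.pi) * (a / (u ^ 2 + a ^ 2)))
  refine le_trans hfinal (le_of_eq ?_)
  field_simp

lemma Gc_cont (a t : ℝ) : Continuous (Gc a t) := by
  unfold Gc
  exact Complex.continuous_ofReal.comp ((gker_cont a t).comp (by fun_prop))

lemma Gc_int (a t : ℝ) (ha : 0 < a) (ht : 0 < t) : Integrable (Gc a t) := by
  have h2π : (0:ℝ) < 2 * Real.pi := by positivity
  apply (Gc_cont a t).integrable_of_hasCompactSupport
  apply HasCompactSupport.intro
    (isCompact_Icc (a := -(t / (2 * Real.pi))) (b := t / (2 * Real.pi)))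
  intro v hv
  have hpos := div_pos ht h2π
  have hv' : v < -(t / (2 * Real.pi)) ∨ t / (2 * Real.pi) < v := by
    by_contra h
    push_neg at h
    exact hv (Set.mem_Icc.mpr ⟨h.1, h.2⟩)
  have hb : t / (2 * Real.pi) < |v| := by
    rcases hv' with h | h
    · rw [abs_of_neg (by linarith : v < 0)]; linarith
    · rw [abs_of_pos (by linarith : 0 < v)]; exact h
  have ht2 : t ≤ |2 * Real.pi * v| := by
    rw [abs_mul, abs_of_pos h2π]
    rw [div_lt_iff₀ h2π] at hb
    nlinarith
  simp [Gc, gker_zero a t _ ht2]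

lemma fKk (a t : ℝ) (ha : 0 < a) (ht : 0 < t) :
    𝓕 (fun u : ℝ => ((Kk a t u : ℝ) : ℂ)) = Gc a t := by
  have hK : (fun u : ℝ => ((Kk a t u : ℝ) : ℂ)) = 𝓕⁻ (Gc a t) :=
    funext fun u => (inv_eq a t ha ht u).symm
  have hG : 𝓕 (Gc a t) = fun u : ℝ => ((Kk a t u : ℝ) : ℂ) := by
    funext u
    nth_rewrite 1 [← neg_neg u]
    rw [← Real.fourierInv_eq_fourier_neg, inv_eq a t ha ht (-u), Kk_even]
  rw [hK]
  apply Continuous.fourier_fourierInv_eq (Gc_cont a t) (Gc_int a t ha ht)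
  rw [hG]
  exact (Kk_int a t ha ht).ofReal



/-- The Fourier transform of `K_{λ,t}` equals `(2π)^{-1/2}(1 - e^{-2αλ²(t-|q|)})` for
`|q| ≤ t` and vanishes for `|q| > t`. -/
theorem statement3 (α lam t : ℝ) (hα : 0 < α) (hlam : 0 < lam) (ht : 0 < t) (q : ℝ) :
    (|q| ≤ t → fourierT (Kkernel α lam t) q =
      ((Real.sqrt (2 * Real.pi))⁻¹ : ℝ) *
        (1 - Complex.exp (-2 * α * lam ^ 2 * (t - |q|)))) ∧
    (t < |q| → fourierT (Kkernel α lam t) q = 0) := by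
  have ha : (0:ℝ) < 2 * α * lam ^ 2 := by positivity
  have hKker : Kkernel α lam t = Kk (2 * α * lam ^ 2) t := by
    funext u
    unfold Kkernel Kk
    ring_nf
  have hmain : ∀ q' : ℝ, fourierT (Kkernel α lam t) q'
      = ((Real.sqrt (2 * Real.pi))⁻¹ : ℝ) * ((gker (2 * α * lam ^ 2) t q' : ℝ) : ℂ) := by
    intro q'
    unfold fourierT
    rw [hKker]
    congr 1
    have h1 : (∫ u : ℝ, ((Kk (2 * α * lam ^ 2) t u : ℝ) : ℂ)
          * Complex.exp (-Complex.I * (q' : ℂ) * (u : ℂ)))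
        = 𝓕 (fun u : ℝ => ((Kk (2 * α * lam ^ 2) t u : ℝ) : ℂ)) (q' / (2 * Real.pi)) := by
      rw [Real.fourier_real_eq_integral_exp_smul]
      refine integral_congr_ae (Filter.Eventually.of_forall fun v => ?_)
      simp only [smul_eq_mul]
      rw [mul_comm]
      congr 2
      push_cast
      have hπ : ((Real.pi : ℂ)) ≠ 0 := Complex.ofReal_ne_zero.mpr Real.pi_ne_zero
      field_simp
    rw [h1, fKk _ t ha ht]
    unfold Gc
    rw [show 2 * Real.pi * (q' / (2 * Real.pi)) = q' by field_simp]
  constructor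
  · intro hq
    rw [hmain q]
    congr 1
    unfold gker
    rw [min_eq_left hq]
    push_cast
    ring_nf
  · intro hq
    rw [hmain q]
    unfold gker
    rw [min_eq_right hq.le]
    norm_num
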